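/- Let Φ and φ denote the standard normal cumulative distribution function and density. For every ε ∈ (0,1) and every u ∈ ℝ, both Φ(u/(1−ε)) − Φ(u) ≤ (ε/(1−ε)) · (1/√(2πe)) and Φ(u) − Φ(u/(1+ε)) ≤ (ε/(1−ε)) · (1/√(2πe)); consequently, sup_{u∈ℝ} max{ Φ(u/(1−ε)) − Φ(u), Φ(u) − Φ(u/(1+ε)) } ≤ (ε/(1−ε)) · (1/√(2πe)). -/
import Mathlib


open MeasureTheory ProbabilityTheory

/-- The standard normal cumulative distribution function `Φ`. -/
noncomputable def stdGaussCDF (u : ℝ) : ℝ := (gaussianReal 0 1 (Set.Iic u)).toReal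

lemma stdGaussCDF_eq (u : ℝ) :
    stdGaussCDF u = ∫ x in Set.Iic u, gaussianPDFReal 0 1 x := by
  rw [stdGaussCDF, gaussianReal_apply_eq_integral 0 one_ne_zero,
    ENNReal.toReal_ofReal (setIntegral_nonneg measurableSet_Iic
      fun x _ => gaussianPDFReal_nonneg 0 1 x)]

lemma stdGaussCDF_sub (a b : ℝ) :
    stdGaussCDF b - stdGaussCDF a = ∫ x in a..b, gaussianPDFReal 0 1 x := by
  rw [stdGaussCDF_eq, stdGaussCDF_eq]
  exact intervalIntegral.integral_Iic_sub_Iic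
    ((integrable_gaussianPDFReal 0 1).integrableOn)
    ((integrable_gaussianPDFReal 0 1).integrableOn)

lemma stdGaussCDF_mono : Monotone stdGaussCDF := by
  intro a b hab
  have := intervalIntegral.integral_nonneg hab
    (fun x _ => gaussianPDFReal_nonneg 0 1 x) (μ := volume)
  have h := stdGaussCDF_sub a b
  linarith [h ▸ this]

lemma gaussPDF_eval (x : ℝ) :
    gaussianPDFReal 0 1 x = (Real.sqrt (2 * Real.pi))⁻¹ * Real.exp (- x ^ 2 / 2) := by
  simp [gaussianPDFReal]

lemma gaussPDF_anti {a x : ℝ} (ha : 0 ≤ a) (hx : a ≤ x) :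
    gaussianPDFReal 0 1 x ≤ gaussianPDFReal 0 1 a := by
  rw [gaussPDF_eval, gaussPDF_eval]
  have h : Real.exp (- x ^ 2 / 2) ≤ Real.exp (- a ^ 2 / 2) := by
    apply Real.exp_le_exp.mpr
    nlinarith
  exact mul_le_mul_of_nonneg_left h (by positivity)

lemma xphi_le {x : ℝ} (hx : 0 ≤ x) :
    x * gaussianPDFReal 0 1 x ≤ 1 / Real.sqrt (2 * Real.pi * Real.exp 1) := by
  have hπ : (0:ℝ) < 2 * Real.pi := by positivity
  have hs : Real.sqrt (2 * Real.pi * Real.exp 1)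
      = Real.sqrt (2 * Real.pi) * Real.exp (1 / 2) := by
    rw [Real.sqrt_mul hπ.le, Real.exp_half]
  have hsp : (0:ℝ) < Real.sqrt (2 * Real.pi) := Real.sqrt_pos.mpr hπ
  have h1 : x * Real.exp (- x ^ 2 / 2) ≤ (Real.exp (1/2))⁻¹ := by
    have h2 : x ≤ Real.exp (x ^ 2 / 2 - 1 / 2) := by
      have := Real.add_one_le_exp (x ^ 2 / 2 - 1 / 2)
      nlinarith [sq_nonneg (x - 1)]
    calc x * Real.exp (- x ^ 2 / 2)
        ≤ Real.exp (x ^ 2 / 2 - 1 / 2) * Real.exp (- x ^ 2 / 2) :=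
          mul_le_mul_of_nonneg_right h2 (Real.exp_nonneg _)
      _ = (Real.exp (1/2))⁻¹ := by
          rw [← Real.exp_add, ← Real.exp_neg]; ring_nf
  rw [gaussPDF_eval, hs, one_div, mul_inv]
  calc x * ((Real.sqrt (2 * Real.pi))⁻¹ * Real.exp (- x ^ 2 / 2))
      = (Real.sqrt (2 * Real.pi))⁻¹ * (x * Real.exp (- x ^ 2 / 2)) := by ring
    _ ≤ (Real.sqrt (2 * Real.pi))⁻¹ * (Real.exp (1/2))⁻¹ :=
        mul_le_mul_of_nonneg_left h1 (by positivity)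

lemma key_bound {a b : ℝ} (ha : 0 ≤ a) (hab : a ≤ b) :
    stdGaussCDF b - stdGaussCDF a ≤ (b - a) * gaussianPDFReal 0 1 a := by
  rw [stdGaussCDF_sub]
  calc ∫ x in a..b, gaussianPDFReal 0 1 x
      ≤ ∫ _ in a..b, gaussianPDFReal 0 1 a := by
        apply intervalIntegral.integral_mono_on hab
          ((integrable_gaussianPDFReal 0 1).intervalIntegrable)
          intervalIntegrable_const
        intro x hx
        exact gaussPDF_anti ha hx.1
    _ = (b - a) * gaussianPDFReal 0 1 a := by simp [smul_eq_mul]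

theorem stmt9 (ε : ℝ) (hε0 : 0 < ε) (hε1 : ε < 1) :
    (∀ u : ℝ,
      stdGaussCDF (u / (1 - ε)) - stdGaussCDF u
          ≤ ε / (1 - ε) * (1 / Real.sqrt (2 * Real.pi * Real.exp 1)) ∧
      stdGaussCDF u - stdGaussCDF (u / (1 + ε))
          ≤ ε / (1 - ε) * (1 / Real.sqrt (2 * Real.pi * Real.exp 1))) ∧
    (⨆ u : ℝ, max (stdGaussCDF (u / (1 - ε)) - stdGaussCDF u)
        (stdGaussCDF u - stdGaussCDF (u / (1 + ε))))
      ≤ ε / (1 - ε) * (1 / Real.sqrt (2 * Real.pi * Real.exp 1)) := by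
  have h1ε : (0:ℝ) < 1 - ε := by linarith
  have h1ε' : (0:ℝ) < 1 + ε := by linarith
  have hCpos : (0:ℝ) ≤ 1 / Real.sqrt (2 * Real.pi * Real.exp 1) := by positivity
  have hεε : ε ≤ ε / (1 - ε) := by
    rw [le_div_iff₀ h1ε]; nlinarith
  have hmain : ∀ u : ℝ,
      stdGaussCDF (u / (1 - ε)) - stdGaussCDF u
          ≤ ε / (1 - ε) * (1 / Real.sqrt (2 * Real.pi * Real.exp 1)) ∧
      stdGaussCDF u - stdGaussCDF (u / (1 + ε))
          ≤ ε / (1 - ε) * (1 / Real.sqrt (2 * Real.pi * Real.exp 1)) := by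
    intro u
    rcases le_or_gt 0 u with hu | hu
    · constructor
      · have hab : u ≤ u / (1 - ε) := by
          rw [le_div_iff₀ h1ε]; nlinarith
        calc stdGaussCDF (u / (1 - ε)) - stdGaussCDF u
            ≤ (u / (1 - ε) - u) * gaussianPDFReal 0 1 u := key_bound hu hab
          _ = ε / (1 - ε) * (u * gaussianPDFReal 0 1 u) := by
              field_simp; ring
          _ ≤ ε / (1 - ε) * (1 / Real.sqrt (2 * Real.pi * Real.exp 1)) := by
              exact mul_le_mul_of_nonneg_left (xphi_le hu) (by positivity)
      · have ha : 0 ≤ u / (1 + ε) := by positivity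
        have hab : u / (1 + ε) ≤ u := by
          rw [div_le_iff₀ h1ε']; nlinarith
        calc stdGaussCDF u - stdGaussCDF (u / (1 + ε))
            ≤ (u - u / (1 + ε)) * gaussianPDFReal 0 1 (u / (1 + ε)) :=
              key_bound ha hab
          _ = ε * (u / (1 + ε) * gaussianPDFReal 0 1 (u / (1 + ε))) := by
              field_simp; ring
          _ ≤ ε * (1 / Real.sqrt (2 * Real.pi * Real.exp 1)) :=
              mul_le_mul_of_nonneg_left (xphi_le ha) hε0.le
          _ ≤ ε / (1 - ε) * (1 / Real.sqrt (2 * Real.pi * Real.exp 1)) :=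
              mul_le_mul_of_nonneg_right hεε hCpos
    · constructor
      · have : u / (1 - ε) ≤ u := by
          rw [div_le_iff₀ h1ε]; nlinarith
        have := stdGaussCDF_mono this
        have hC : (0:ℝ) ≤ ε / (1 - ε) * (1 / Real.sqrt (2 * Real.pi * Real.exp 1)) := by
          positivity
        linarith
      · have : u ≤ u / (1 + ε) := by
          rw [le_div_iff₀ h1ε']; nlinarith
        have := stdGaussCDF_mono this
        have hC : (0:ℝ) ≤ ε / (1 - ε) * (1 / Real.sqrt (2 * Real.pi * Real.exp 1)) := by
          positivity
        linarith
  refine ⟨hmain, ciSup_le fun u => ?_⟩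
  exact max_le (hmain u).1 (hmain u).2
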